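/- Define on tuples the kernel-sum measure λ_n on E^n (E a finite set with finite measure α) by λ_n(B) = Σ_{σ ∈ Σ_n} (∏_{A∈σ} (|A|-1)!) ∫ (1_B)_σ dα^{⊗|σ|}. Then λ_{n+1} = λ_n k_{n,n+1}, where k_{n,n+1}(x_1,...,x_n; B) = ∫ 1_B(x_1,...,x_n,y) α(dy) + Σ_{i=1}^n 1_B(x_1,...,x_n,x_i). -/

import Mathlib

attribute [local instance] Classical.propDecidable

/-- The set partitions of `Fin n`, encoded as finsets of nonempty, pairwise disjoint blocks
covering `Fin n` (each element lies in exactly one block). -/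
noncomputable def SetPartitions (n : ℕ) : Finset (Finset (Finset (Fin n))) :=
  Finset.univ.filter (fun P => (∅ ∉ P) ∧ ∀ k : Fin n, ∃! A, A ∈ P ∧ k ∈ A)

/-- The block of the partition `P` containing `k` (the union of the blocks containing `k`,
which for a genuine partition is the unique such block). -/
noncomputable def blockOf {n : ℕ} (P : Finset (Finset (Fin n))) (k : Fin n) :
    Finset (Fin n) :=
  (P.filter (fun A => k ∈ A)).sup id

/-- The integral `∫ f dλ_n` for the measure
`λ_n(B) = ∑_{σ ∈ Σ_n} (∏_{A ∈ σ} (|A|-1)!) ∫ (1_B)_σ dα^{⊗|σ|}` on `E^n`: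
for each partition `P`, the inner sum runs over assignments `J` of a point of `E` to each
block of `P`, weighted by `∏_{A ∈ P} α(J A)`, and `f` is evaluated at the tuple obtained by
giving every coordinate the value assigned to its block. -/
noncomputable def lamInt {E : Type*} [Fintype E] [Nonempty E]
    (α : E → ℝ) (n : ℕ) (f : (Fin n → E) → ℝ) : ℝ :=
  ∑ P ∈ SetPartitions n,
    (∏ A ∈ P, ((A.card - 1).factorial : ℝ)) *
      ∑ J ∈ P.pi (fun _ => (Finset.univ : Finset E)),
        (∏ A ∈ P.attach, α (J A.1 A.2)) *
          f (fun k => if h : blockOf P k ∈ P then J (blockOf P k) h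
                      else Classical.arbitrary E)

section aux
open Finset

def isPart {m : ℕ} (P : Finset (Finset (Fin m))) : Prop :=
  (∅ ∉ P) ∧ ∀ k : Fin m, ∃! A, A ∈ P ∧ k ∈ A

lemma mem_setPartitions {m : ℕ} {P : Finset (Finset (Fin m))} :
    P ∈ SetPartitions m ↔ isPart P := by
  simp [SetPartitions, isPart]

lemma blockOf_eq_of {m : ℕ} {P : Finset (Finset (Fin m))} (hP : isPart P)
    {A : Finset (Fin m)} {k : Fin m} (hA : A ∈ P) (hk : k ∈ A) : blockOf P k = A := by
  obtain ⟨C, hC, hu⟩ := hP.2 k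
  have hfilter : P.filter (fun A => k ∈ A) = {C} := by
    ext D
    simp only [mem_filter, mem_singleton]
    constructor
    · rintro ⟨h1, h2⟩; exact hu D ⟨h1, h2⟩
    · rintro rfl; exact hC
  have hAC : A = C := hu A ⟨hA, hk⟩
  rw [blockOf, hfilter, sup_singleton, id, hAC]

lemma blockOf_mem {m : ℕ} {P : Finset (Finset (Fin m))} (hP : isPart P) (k : Fin m) :
    blockOf P k ∈ P ∧ k ∈ blockOf P k := by
  obtain ⟨C, ⟨hC, hkC⟩, _⟩ := hP.2 k
  rw [blockOf_eq_of hP hC hkC]; exact ⟨hC, hkC⟩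

end aux

section aux2
open Finset
variable {E : Type*} [Fintype E] [Nonempty E]

noncomputable def Gfin (E : Type*) [Fintype E] [Nonempty E] {m : ℕ}
    (P : Finset (Finset (Fin m))) : Finset (Finset (Fin m) → E) :=
  Fintype.piFinset fun A => if A ∈ P then (Finset.univ : Finset E) else {Classical.arbitrary E}

lemma mem_Gfin {m : ℕ} {P : Finset (Finset (Fin m))} {g : Finset (Fin m) → E} :
    g ∈ Gfin E P ↔ ∀ A, A ∉ P → g A = Classical.arbitrary E := by
  simp only [Gfin, Fintype.mem_piFinset]
  constructor
  · intro h A hA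
    have := h A
    rwa [if_neg hA, mem_singleton] at this
  · intro h A
    by_cases hA : A ∈ P
    · rw [if_pos hA]; exact mem_univ _
    · rw [if_neg hA, mem_singleton]; exact h A hA

lemma lamInt_eq (α : E → ℝ) (m : ℕ) (f : (Fin m → E) → ℝ) :
    lamInt α m f = ∑ P ∈ SetPartitions m,
      (∏ A ∈ P, ((A.card - 1).factorial : ℝ)) *
        ∑ g ∈ Gfin E P, (∏ A ∈ P, α (g A)) * f (fun k => g (blockOf P k)) := by
  unfold lamInt
  refine Finset.sum_congr rfl fun P _ => ?_
  congr 1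
  refine Finset.sum_nbij'
    (i := fun J => (fun A => if h : A ∈ P then J A h else Classical.arbitrary E))
    (j := fun g => (fun A _ => g A)) ?_ ?_ ?_ ?_ ?_
  · intro J _
    rw [mem_Gfin]
    intro A hA
    simp only [dif_neg hA]
  · intro g _
    rw [Finset.mem_pi]
    intros; exact mem_univ _
  · intro J _
    funext A hA
    simp only [dif_pos hA]
  · intro g hg
    funext A
    by_cases hA : A ∈ P
    · simp only [dif_pos hA]
    · simp only [dif_neg hA]; exact ((mem_Gfin.mp hg) A hA).symm
  · intro J _
    refine congrArg₂ (· * ·) ?_ (congrArg f ?_)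
    · rw [← Finset.prod_attach P (fun A => α (if h : A ∈ P then J A h else Classical.arbitrary E))]
      refine Finset.prod_congr rfl fun A _ => ?_
      simp only [dif_pos A.2]
    · funext k
      by_cases h : blockOf P k ∈ P
      · simp only [dif_pos h]
      · simp only [dif_neg h]

end aux2

section aux3
open Finset
variable {n : ℕ}

def emb (A : Finset (Fin n)) : Finset (Fin (n + 1)) := A.image Fin.castSucc

def dmb (C : Finset (Fin (n + 1))) : Finset (Fin n) :=
  Finset.univ.filter (fun k => Fin.castSucc k ∈ C)

lemma mem_emb {A : Finset (Fin n)} {k : Fin n} : Fin.castSucc k ∈ emb A ↔ k ∈ A := by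
  simp [emb, Fin.castSucc_injective n |>.eq_iff]

lemma last_not_mem_emb {A : Finset (Fin n)} : Fin.last n ∉ emb A := by
  simp only [emb, mem_image]
  rintro ⟨a, _, ha⟩
  exact absurd ha (Fin.castSucc_lt_last a).ne

lemma mem_dmb {C : Finset (Fin (n + 1))} {k : Fin n} : k ∈ dmb C ↔ Fin.castSucc k ∈ C := by
  simp [dmb]

lemma dmb_emb (A : Finset (Fin n)) : dmb (emb A) = A := by
  ext k; rw [mem_dmb, mem_emb]

lemma emb_inj : Function.Injective (emb (n := n)) := fun A B h => by
  rw [← dmb_emb A, h, dmb_emb]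

lemma emb_dmb {C : Finset (Fin (n + 1))} (h : Fin.last n ∉ C) : emb (dmb C) = C := by
  ext x
  refine Fin.lastCases ?_ (fun k => ?_) x
  · simp [last_not_mem_emb, h]
  · rw [mem_emb, mem_dmb]

lemma card_emb (A : Finset (Fin n)) : (emb A).card = A.card :=
  Finset.card_image_of_injective _ (Fin.castSucc_injective n)

lemma emb_ne_empty {A : Finset (Fin n)} (h : A ≠ ∅) : emb A ≠ ∅ := by
  intro hc
  exact h (emb_inj (by rw [hc]; rfl))

noncomputable def P0 (Q : Finset (Finset (Fin n))) : Finset (Finset (Fin (n + 1))) :=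
  insert {Fin.last n} (Q.image emb)

noncomputable def P1 (Q : Finset (Finset (Fin n))) (A : Finset (Fin n)) :
    Finset (Finset (Fin (n + 1))) :=
  insert (insert (Fin.last n) (emb A)) ((Q.erase A).image emb)

lemma last_mem_only {P : Finset (Finset (Fin (n+1)))} (hP : isPart P)
    {C : Finset (Fin (n+1))} (hC : C ∈ P) (hl : Fin.last n ∈ C) :
    C = blockOf P (Fin.last n) := (blockOf_eq_of hP hC hl).symm

end aux3

section aux4
open Finset
variable {n : ℕ} {Q : Finset (Finset (Fin n))}

lemma isPart_P0 (hQ : isPart Q) : isPart (P0 Q) := by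
  constructor
  · intro h
    rcases Finset.mem_insert.mp h with h | h
    · exact (Finset.singleton_ne_empty _) h.symm
    · obtain ⟨A, hA, hAe⟩ := Finset.mem_image.mp h
      have : A = ∅ := emb_inj (by rw [hAe]; rfl)
      exact hQ.1 (this ▸ hA)
  · intro k
    refine Fin.lastCases ?_ (fun j => ?_) k
    · refine ⟨{Fin.last n}, ⟨Finset.mem_insert_self _ _, Finset.mem_singleton_self _⟩, ?_⟩
      rintro C ⟨hC, hl⟩
      rcases Finset.mem_insert.mp hC with h | h
      · exact h
      · obtain ⟨A, _, rfl⟩ := Finset.mem_image.mp h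
        exact absurd hl last_not_mem_emb
    · have hb := blockOf_mem hQ j
      refine ⟨emb (blockOf Q j),
        ⟨Finset.mem_insert_of_mem (Finset.mem_image_of_mem _ hb.1), mem_emb.mpr hb.2⟩, ?_⟩
      rintro C ⟨hC, hj⟩
      rcases Finset.mem_insert.mp hC with h | h
      · subst h
        exact absurd (Finset.mem_singleton.mp hj) (Fin.castSucc_lt_last j).ne
      · obtain ⟨A, hA, rfl⟩ := Finset.mem_image.mp h
        rw [blockOf_eq_of hQ hA (mem_emb.mp hj)]

lemma blockOf_P0_last (hQ : isPart Q) :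
    blockOf (P0 Q) (Fin.last n) = {Fin.last n} :=
  blockOf_eq_of (isPart_P0 hQ) (Finset.mem_insert_self _ _) (Finset.mem_singleton_self _)

lemma blockOf_P0_castSucc (hQ : isPart Q) (j : Fin n) :
    blockOf (P0 Q) (Fin.castSucc j) = emb (blockOf Q j) :=
  blockOf_eq_of (isPart_P0 hQ)
    (Finset.mem_insert_of_mem (Finset.mem_image_of_mem _ (blockOf_mem hQ j).1))
    (mem_emb.mpr (blockOf_mem hQ j).2)

variable {A : Finset (Fin n)}

lemma last_mem_bb : Fin.last n ∈ insert (Fin.last n) (emb A) := Finset.mem_insert_self _ _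

lemma isPart_P1 (hQ : isPart Q) (hA : A ∈ Q) : isPart (P1 Q A) := by
  constructor
  · intro h
    rcases Finset.mem_insert.mp h with h | h
    · exact (Finset.insert_ne_empty _ _) h.symm
    · obtain ⟨A', hA', hAe⟩ := Finset.mem_image.mp h
      have : A' = ∅ := emb_inj (by rw [hAe]; rfl)
      exact hQ.1 (this ▸ Finset.mem_of_mem_erase hA')
  · intro k
    refine Fin.lastCases ?_ (fun j => ?_) k
    · refine ⟨insert (Fin.last n) (emb A), ⟨Finset.mem_insert_self _ _, last_mem_bb⟩, ?_⟩
      rintro C ⟨hC, hl⟩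
      rcases Finset.mem_insert.mp hC with h | h
      · exact h
      · obtain ⟨A', _, rfl⟩ := Finset.mem_image.mp h
        exact absurd hl last_not_mem_emb
    · by_cases hjA : j ∈ A
      · refine ⟨insert (Fin.last n) (emb A),
          ⟨Finset.mem_insert_self _ _, Finset.mem_insert_of_mem (mem_emb.mpr hjA)⟩, ?_⟩
        rintro C ⟨hC, hj⟩
        rcases Finset.mem_insert.mp hC with h | h
        · exact h
        · obtain ⟨A', hA', rfl⟩ := Finset.mem_image.mp h
          obtain ⟨D, _, hu⟩ := hQ.2 j
          have h1 : A' = D := hu A' ⟨Finset.mem_of_mem_erase hA', mem_emb.mp hj⟩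
          have h2 : A = D := hu A ⟨hA, hjA⟩
          exact absurd (h1.trans h2.symm) (Finset.ne_of_mem_erase hA')
      · have hb := blockOf_mem hQ j
        have hbA : blockOf Q j ≠ A := fun h => hjA (h ▸ hb.2)
        refine ⟨emb (blockOf Q j),
          ⟨Finset.mem_insert_of_mem (Finset.mem_image_of_mem _
            (Finset.mem_erase.mpr ⟨hbA, hb.1⟩)), mem_emb.mpr hb.2⟩, ?_⟩
        rintro C ⟨hC, hj⟩
        rcases Finset.mem_insert.mp hC with h | h
        · subst h
          rcases Finset.mem_insert.mp hj with h' | h'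
          · exact absurd h' (Fin.castSucc_lt_last j).ne
          · exact absurd (mem_emb.mp h') hjA
        · obtain ⟨A', hA', rfl⟩ := Finset.mem_image.mp h
          rw [blockOf_eq_of hQ (Finset.mem_of_mem_erase hA') (mem_emb.mp hj)]

lemma blockOf_P1_last (hQ : isPart Q) (hA : A ∈ Q) :
    blockOf (P1 Q A) (Fin.last n) = insert (Fin.last n) (emb A) :=
  blockOf_eq_of (isPart_P1 hQ hA) (Finset.mem_insert_self _ _) last_mem_bb

lemma blockOf_P1_castSucc_mem (hQ : isPart Q) (hA : A ∈ Q) {j : Fin n} (hj : j ∈ A) :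
    blockOf (P1 Q A) (Fin.castSucc j) = insert (Fin.last n) (emb A) :=
  blockOf_eq_of (isPart_P1 hQ hA) (Finset.mem_insert_self _ _)
    (Finset.mem_insert_of_mem (mem_emb.mpr hj))

lemma blockOf_P1_castSucc_not (hQ : isPart Q) (hA : A ∈ Q) {j : Fin n} (hj : j ∉ A) :
    blockOf (P1 Q A) (Fin.castSucc j) = emb (blockOf Q j) := by
  have hb := blockOf_mem hQ j
  have hbA : blockOf Q j ≠ A := fun h => hj (h ▸ hb.2)
  exact blockOf_eq_of (isPart_P1 hQ hA)
    (Finset.mem_insert_of_mem (Finset.mem_image_of_mem _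
      (Finset.mem_erase.mpr ⟨hbA, hb.1⟩))) (mem_emb.mpr hb.2)

end aux4

section aux5
open Finset
variable {n : ℕ}

noncomputable def resP (P : Finset (Finset (Fin (n + 1)))) : Finset (Finset (Fin n)) :=
  (P.image dmb).erase ∅

lemma dmb_singleton_last : dmb ({Fin.last n} : Finset (Fin (n + 1))) = ∅ := by
  ext k
  simp only [mem_dmb, Finset.mem_singleton, Finset.notMem_empty, iff_false]
  exact (Fin.castSucc_lt_last k).ne

lemma dmb_insert_last (A : Finset (Fin n)) : dmb (insert (Fin.last n) (emb A)) = A := by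
  ext k
  rw [mem_dmb, Finset.mem_insert, mem_emb]
  simp [(Fin.castSucc_lt_last k).ne]

lemma isPart_res {P : Finset (Finset (Fin (n + 1)))} (hP : isPart P) : isPart (resP P) := by
  constructor
  · exact Finset.notMem_erase _ _
  · intro k
    have hb := blockOf_mem hP (Fin.castSucc k)
    have hkd : k ∈ dmb (blockOf P (Fin.castSucc k)) := mem_dmb.mpr hb.2
    refine ⟨dmb (blockOf P (Fin.castSucc k)), ⟨Finset.mem_erase.mpr
      ⟨fun h => by rw [h] at hkd; exact absurd hkd (Finset.notMem_empty k),
        Finset.mem_image_of_mem _ hb.1⟩, hkd⟩, ?_⟩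
    rintro A' ⟨hA', hk⟩
    obtain ⟨C', hC', rfl⟩ := Finset.mem_image.mp (Finset.mem_of_mem_erase hA')
    rw [blockOf_eq_of hP hC' (mem_dmb.mp hk)]

lemma res_P0 {Q : Finset (Finset (Fin n))} (hQ : isPart Q) : resP (P0 Q) = Q := by
  rw [resP, P0, Finset.image_insert, Finset.image_image, dmb_singleton_last]
  have : Q.image (dmb ∘ emb) = Q := by
    rw [show dmb ∘ emb = id from funext dmb_emb, Finset.image_id]
  rw [this, Finset.erase_insert hQ.1]

lemma res_P1 {Q : Finset (Finset (Fin n))} (hQ : isPart Q) {A : Finset (Fin n)} (hA : A ∈ Q) :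
    resP (P1 Q A) = Q := by
  rw [resP, P1, Finset.image_insert, Finset.image_image, dmb_insert_last]
  have : (Q.erase A).image (dmb ∘ emb) = Q.erase A := by
    rw [show dmb ∘ emb = id from funext dmb_emb, Finset.image_id]
  rw [this, Finset.insert_erase hA, Finset.erase_eq_of_notMem hQ.1]

lemma notlast_block {P : Finset (Finset (Fin (n + 1)))} (hP : isPart P)
    {C : Finset (Fin (n + 1))} (hC : C ∈ P) (hl : Fin.last n ∉ C) :
    emb (dmb C) = C ∧ dmb C ∈ resP P := by
  refine ⟨emb_dmb hl, Finset.mem_erase.mpr ⟨?_, Finset.mem_image_of_mem _ hC⟩⟩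
  intro h
  have hCe : C ≠ ∅ := fun hc => hP.1 (hc ▸ hC)
  obtain ⟨x, hx⟩ := Finset.nonempty_iff_ne_empty.mpr hCe
  refine Fin.lastCases ?_ (fun j hj => ?_) x hx
  · exact hl
  · have : j ∈ dmb C := mem_dmb.mpr hj
    rw [h] at this
    exact absurd this (Finset.notMem_empty j)

lemma reconstruct0 {P : Finset (Finset (Fin (n + 1)))} (hP : isPart P)
    (hl : blockOf P (Fin.last n) = {Fin.last n}) : P = P0 (resP P) := by
  ext C
  constructor
  · intro hC
    by_cases hlast : Fin.last n ∈ C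
    · have : C = {Fin.last n} := (last_mem_only hP hC hlast).trans hl
      exact this ▸ Finset.mem_insert_self _ _
    · obtain ⟨h1, h2⟩ := notlast_block hP hC hlast
      exact Finset.mem_insert_of_mem (h1 ▸ Finset.mem_image_of_mem _ h2)
  · intro hC
    rcases Finset.mem_insert.mp hC with h | h
    · subst h; exact hl ▸ (blockOf_mem hP (Fin.last n)).1
    · obtain ⟨A', hA', rfl⟩ := Finset.mem_image.mp h
      obtain ⟨C'', hC'', rfl⟩ := Finset.mem_image.mp (Finset.mem_of_mem_erase hA')
      have hlC : Fin.last n ∉ C'' := by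
        intro hlc
        have : C'' = {Fin.last n} := (last_mem_only hP hC'' hlc).trans hl
        rw [this, dmb_singleton_last] at hA'
        exact (Finset.mem_erase.mp hA').1 rfl
      rw [emb_dmb hlC]
      exact hC''

lemma block_last_eq {P : Finset (Finset (Fin (n + 1)))} (hP : isPart P)
    (hl : blockOf P (Fin.last n) ≠ {Fin.last n}) :
    insert (Fin.last n) (emb (dmb (blockOf P (Fin.last n)))) = blockOf P (Fin.last n) := by
  have hb := blockOf_mem hP (Fin.last n)
  ext x
  refine Fin.lastCases ?_ (fun j => ?_) x
  · simp [hb.2]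
  · rw [Finset.mem_insert, mem_emb, mem_dmb]
    simp [(Fin.castSucc_lt_last j).ne]

lemma dmb_block_last_mem {P : Finset (Finset (Fin (n + 1)))} (hP : isPart P)
    (hl : blockOf P (Fin.last n) ≠ {Fin.last n}) :
    dmb (blockOf P (Fin.last n)) ∈ resP P := by
  have hb := blockOf_mem hP (Fin.last n)
  refine Finset.mem_erase.mpr ⟨?_, Finset.mem_image_of_mem _ hb.1⟩
  intro h
  apply hl
  have := block_last_eq hP hl
  rw [h] at this
  simpa [emb] using this.symm

lemma reconstruct1 {P : Finset (Finset (Fin (n + 1)))} (hP : isPart P)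
    (hl : blockOf P (Fin.last n) ≠ {Fin.last n}) :
    P = P1 (resP P) (dmb (blockOf P (Fin.last n))) := by
  set b := blockOf P (Fin.last n) with hbdef
  have hb := blockOf_mem hP (Fin.last n)
  have hkey : insert (Fin.last n) (emb (dmb b)) = b := block_last_eq hP hl
  ext C
  constructor
  · intro hC
    by_cases hlast : Fin.last n ∈ C
    · have : C = b := last_mem_only hP hC hlast
      rw [P1, this, hkey]
      exact Finset.mem_insert_self _ _
    · obtain ⟨h1, h2⟩ := notlast_block hP hC hlast
      refine Finset.mem_insert_of_mem (h1 ▸ Finset.mem_image_of_mem _ (Finset.mem_erase.mpr ⟨?_, h2⟩))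
      intro h
      -- dmb C = dmb b, b ≠ {last}, so they share a castSucc element, so C = b, contradiction
      have hdne : dmb b ≠ ∅ := by
        have := dmb_block_last_mem hP hl
        exact (Finset.mem_erase.mp this).1
      obtain ⟨j, hj⟩ := Finset.nonempty_iff_ne_empty.mpr hdne
      have hjC : Fin.castSucc j ∈ C := mem_dmb.mp (h ▸ hj)
      have hjb : Fin.castSucc j ∈ b := mem_dmb.mp hj
      have : C = b :=
        (blockOf_eq_of hP hC hjC).symm.trans (blockOf_eq_of hP hb.1 hjb)
      exact hlast (this ▸ hb.2)
  · intro hC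
    rcases Finset.mem_insert.mp hC with h | h
    · subst h; rw [hkey]; exact hb.1
    · obtain ⟨A', hA', rfl⟩ := Finset.mem_image.mp h
      have hA'mem := Finset.mem_of_mem_erase hA'
      obtain ⟨C'', hC'', rfl⟩ := Finset.mem_image.mp (Finset.mem_of_mem_erase hA'mem)
      have hlC : Fin.last n ∉ C'' := by
        intro hlc
        have : C'' = b := last_mem_only hP hC'' hlc
        exact (Finset.mem_erase.mp hA').1 (by rw [this])
      rw [emb_dmb hlC]
      exact hC''

end aux5

section aux6
open Finset
variable {n : ℕ}

noncomputable def extP (p : Σ _ : Finset (Finset (Fin n)), Option (Finset (Fin n))) :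
    Finset (Finset (Fin (n + 1))) :=
  p.2.elim (P0 p.1) (P1 p.1)

noncomputable def clsP (P : Finset (Finset (Fin (n + 1)))) :
    Σ _ : Finset (Finset (Fin n)), Option (Finset (Fin n)) :=
  ⟨resP P, if blockOf P (Fin.last n) = {Fin.last n} then none
           else some (dmb (blockOf P (Fin.last n)))⟩

lemma sum_partition_split (F : Finset (Finset (Fin (n + 1))) → ℝ) :
    ∑ P ∈ SetPartitions (n + 1), F P
      = ∑ Q ∈ SetPartitions n, (F (P0 Q) + ∑ A ∈ Q, F (P1 Q A)) := by
  have step2 : ∑ Q ∈ SetPartitions n, (F (P0 Q) + ∑ A ∈ Q, F (P1 Q A))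
      = ∑ p ∈ (SetPartitions n).sigma
          (fun Q => insert none (Q.image some)), F (extP p) := by
    rw [Finset.sum_sigma]
    refine Finset.sum_congr rfl fun Q _ => ?_
    rw [Finset.sum_insert (by simp)]
    congr 1
    rw [Finset.sum_image (fun _ _ _ _ h => Option.some_injective _ h)]
    rfl
  rw [step2]
  refine Finset.sum_nbij' (i := clsP) (j := extP) ?_ ?_ ?_ ?_ ?_
  · intro P hP
    have hP' := mem_setPartitions.mp hP
    rw [Finset.mem_sigma]
    refine ⟨mem_setPartitions.mpr (isPart_res hP'), ?_⟩
    simp only [clsP]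
    by_cases h : blockOf P (Fin.last n) = {Fin.last n}
    · rw [if_pos h]; exact Finset.mem_insert_self _ _
    · rw [if_neg h]
      exact Finset.mem_insert_of_mem (Finset.mem_image_of_mem _ (dmb_block_last_mem hP' h))
  · intro p hp
    rw [Finset.mem_sigma] at hp
    have hQ := mem_setPartitions.mp hp.1
    obtain ⟨Q, c⟩ := p
    match c with
    | none => exact mem_setPartitions.mpr (isPart_P0 hQ)
    | some A =>
      have hA : A ∈ Q := by
        rcases Finset.mem_insert.mp hp.2 with h | h
        · exact absurd h (by simp)
        · obtain ⟨A', hA', hAe⟩ := Finset.mem_image.mp h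
          exact (Option.some_injective _ hAe.symm) ▸ hA'
      exact mem_setPartitions.mpr (isPart_P1 hQ hA)
  · intro P hP
    have hP' := mem_setPartitions.mp hP
    simp only [clsP]
    by_cases h : blockOf P (Fin.last n) = {Fin.last n}
    · rw [if_pos h]
      exact (reconstruct0 hP' h).symm
    · rw [if_neg h]
      exact (reconstruct1 hP' h).symm
  · intro p hp
    rw [Finset.mem_sigma] at hp
    have hQ := mem_setPartitions.mp hp.1
    obtain ⟨Q, c⟩ := p
    match c with
    | none =>
      simp only [extP, clsP, Option.elim]
      simp [blockOf_P0_last hQ, res_P0 hQ]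
    | some A =>
      have hA : A ∈ Q := by
        rcases Finset.mem_insert.mp hp.2 with h | h
        · exact absurd h (by simp)
        · obtain ⟨A', hA', hAe⟩ := Finset.mem_image.mp h
          exact (Option.some_injective _ hAe.symm) ▸ hA'
      have hAne : A ≠ ∅ := fun h => hQ.1 (h ▸ hA)
      obtain ⟨j, hj⟩ := Finset.nonempty_iff_ne_empty.mpr hAne
      simp only [extP, clsP, Option.elim]
      simp only [blockOf_P1_last hQ hA, res_P1 hQ hA]
      rw [if_neg, dmb_insert_last]
      intro h
      have : Fin.castSucc j ∈ insert (Fin.last n) (emb A) :=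
        Finset.mem_insert_of_mem (mem_emb.mpr hj)
      rw [h, Finset.mem_singleton] at this
      exact (Fin.castSucc_lt_last j).ne this
  · intro P hP
    have hP' := mem_setPartitions.mp hP
    have : extP (clsP P) = P := by
      simp only [clsP]
      by_cases h : blockOf P (Fin.last n) = {Fin.last n}
      · rw [if_pos h]
        exact (reconstruct0 hP' h).symm
      · rw [if_neg h]
        exact (reconstruct1 hP' h).symm
    rw [this]

end aux6

section aux7
open Finset
variable {E : Type*} [Fintype E] [Nonempty E] (α : E → ℝ) {n : ℕ}
variable {Q : Finset (Finset (Fin n))}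

lemma singleton_last_not_mem_image : ({Fin.last n} : Finset (Fin (n + 1))) ∉ Q.image emb := by
  intro h
  obtain ⟨A, _, hAe⟩ := Finset.mem_image.mp h
  exact last_not_mem_emb (hAe ▸ Finset.mem_singleton_self _)

lemma prod_fact_P0 :
    (∏ C ∈ P0 Q, ((C.card - 1).factorial : ℝ)) = ∏ A ∈ Q, ((A.card - 1).factorial : ℝ) := by
  rw [P0, Finset.prod_insert singleton_last_not_mem_image,
    Finset.prod_image (fun A _ B _ h => emb_inj h)]
  simp [card_emb]

lemma Psi0_left (hQ : isPart Q) {g : Finset (Fin (n + 1)) → E} (hg : g ∈ Gfin E (P0 Q)) :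
    (fun C => if C ∈ P0 Q then
        (if C = {Fin.last n} then g {Fin.last n}
         else (fun A => if A ∈ Q then g (emb A) else Classical.arbitrary E) (dmb C))
      else Classical.arbitrary E) = g := by
  funext C
  by_cases hC : C ∈ P0 Q
  · simp only [if_pos hC]
    by_cases hCl : C = {Fin.last n}
    · rw [if_pos hCl, hCl]
    · rw [if_neg hCl]
      rcases Finset.mem_insert.mp hC with h' | h'
      · exact absurd h' hCl
      · obtain ⟨A, hA, rfl⟩ := Finset.mem_image.mp h'
        simp only [dmb_emb A, if_pos hA]
  · simp only [if_neg hC]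
    exact ((mem_Gfin.mp hg) C hC).symm

lemma sum_G_P0 (hQ : isPart Q) (h : (Finset (Fin (n + 1)) → E) → ℝ) :
    ∑ g ∈ Gfin E (P0 Q), h g
      = ∑ p ∈ (Finset.univ : Finset E) ×ˢ Gfin E Q,
          h (fun C => if C ∈ P0 Q then
              (if C = {Fin.last n} then p.1 else p.2 (dmb C)) else Classical.arbitrary E) := by
  refine Finset.sum_nbij'
    (i := fun g => (g {Fin.last n}, fun A => if A ∈ Q then g (emb A) else Classical.arbitrary E))
    (j := fun p => (fun C => if C ∈ P0 Q then
        (if C = {Fin.last n} then p.1 else p.2 (dmb C)) else Classical.arbitrary E))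
    ?_ ?_ ?_ ?_ ?_
  · intro g _
    rw [Finset.mem_product]
    refine ⟨mem_univ _, mem_Gfin.mpr fun A hA => by simp only [if_neg hA]⟩
  · intro p _
    rw [mem_Gfin]
    intro C hC
    simp only [if_neg hC]
  · intro g hg
    exact Psi0_left hQ hg
  · intro p hp
    rw [Finset.mem_product] at hp
    have hg' := mem_Gfin.mp hp.2
    refine Prod.ext ?_ ?_
    · have h1 : ({Fin.last n} : Finset (Fin (n + 1))) ∈ P0 Q := Finset.mem_insert_self _ _
      simp [h1]
    · funext A
      by_cases hA : A ∈ Q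
      · simp only [if_pos hA]
        have h1 : emb A ∈ P0 Q := Finset.mem_insert_of_mem (Finset.mem_image_of_mem _ hA)
        have h2 : emb A ≠ {Fin.last n} :=
          fun h => last_not_mem_emb (h ▸ Finset.mem_singleton_self _)
        rw [if_pos h1, if_neg h2, dmb_emb]
      · simp only [if_neg hA]
        exact (hg' A hA).symm
  · intro g hg
    exact congrArg h (Psi0_left hQ hg).symm

lemma Phi0_emb {p : E × (Finset (Fin n) → E)} {A : Finset (Fin n)} (hA : A ∈ Q) :
    (if emb A ∈ P0 Q then
        (if emb A = {Fin.last n} then p.1 else p.2 (dmb (emb A))) else Classical.arbitrary E)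
      = p.2 A := by
  have h1 : emb A ∈ P0 Q := Finset.mem_insert_of_mem (Finset.mem_image_of_mem _ hA)
  have h2 : emb A ≠ {Fin.last n} := fun h => last_not_mem_emb (h ▸ Finset.mem_singleton_self _)
  rw [if_pos h1, if_neg h2, dmb_emb]

lemma sumI (hQ : isPart Q) (f : (Fin (n + 1) → E) → ℝ) :
    (∏ C ∈ P0 Q, ((C.card - 1).factorial : ℝ)) *
      ∑ g ∈ Gfin E (P0 Q), (∏ C ∈ P0 Q, α (g C)) * f (fun k => g (blockOf (P0 Q) k))
    = (∏ A ∈ Q, ((A.card - 1).factorial : ℝ)) *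
      ∑ g' ∈ Gfin E Q, (∏ A ∈ Q, α (g' A)) *
        ∑ y : E, α y * f (Fin.snoc (fun j => g' (blockOf Q j)) y) := by
  rw [prod_fact_P0, sum_G_P0 hQ]
  congr 1
  rw [Finset.sum_product_right]
  refine Finset.sum_congr rfl fun g' hg' => ?_
  rw [Finset.mul_sum]
  refine Finset.sum_congr rfl fun y _ => ?_
  have hprod : (∏ C ∈ P0 Q, α (if C ∈ P0 Q then
      (if C = {Fin.last n} then y else g' (dmb C)) else Classical.arbitrary E))
      = α y * ∏ A ∈ Q, α (g' A) := by
    rw [P0, Finset.prod_insert singleton_last_not_mem_image,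
      Finset.prod_image (fun A _ B _ h => emb_inj h)]
    congr 1
    · have h1 : ({Fin.last n} : Finset (Fin (n + 1))) ∈
        insert ({Fin.last n} : Finset (Fin (n + 1))) (Q.image emb) := Finset.mem_insert_self _ _
      simp [h1]
    · refine Finset.prod_congr rfl fun A hA => ?_
      exact congrArg α (Phi0_emb (p := (y, g')) hA)
  have htup : (fun k => (fun C => if C ∈ P0 Q then
      (if C = {Fin.last n} then y else g' (dmb C)) else Classical.arbitrary E)
        (blockOf (P0 Q) k))
      = Fin.snoc (fun j => g' (blockOf Q j)) y := by
    funext k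
    refine Fin.lastCases ?_ (fun j => ?_) k
    · have h1 : ({Fin.last n} : Finset (Fin (n + 1))) ∈ P0 Q := Finset.mem_insert_self _ _
      rw [blockOf_P0_last hQ, Fin.snoc_last]
      simp [h1]
    · rw [blockOf_P0_castSucc hQ, Fin.snoc_castSucc]
      exact Phi0_emb (p := (y, g')) (blockOf_mem hQ j).1
  rw [hprod, htup]
  ring

end aux7

section aux8
open Finset
variable {E : Type*} [Fintype E] [Nonempty E] (α : E → ℝ) {n : ℕ}
variable {Q : Finset (Finset (Fin n))} {A : Finset (Fin n)}

lemma bb_not_mem_image : insert (Fin.last n) (emb A) ∉ (Q.erase A).image emb := by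
  intro h
  obtain ⟨A', _, hAe⟩ := Finset.mem_image.mp h
  exact last_not_mem_emb (by rw [hAe]; exact last_mem_bb)

lemma card_bb : (insert (Fin.last n) (emb A)).card = A.card + 1 := by
  rw [Finset.card_insert_of_notMem last_not_mem_emb, card_emb]

lemma prod_fact_P1 (hQ : isPart Q) (hA : A ∈ Q) :
    (∏ C ∈ P1 Q A, ((C.card - 1).factorial : ℝ))
      = (A.card : ℝ) * ∏ A' ∈ Q, ((A'.card - 1).factorial : ℝ) := by
  rw [P1, Finset.prod_insert bb_not_mem_image,
    Finset.prod_image (fun A _ B _ h => emb_inj h), card_bb]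
  have hAne : A ≠ ∅ := fun h => hQ.1 (h ▸ hA)
  have hcard : 1 ≤ A.card := Finset.card_pos.mpr (Finset.nonempty_iff_ne_empty.mpr hAne)
  rw [← Finset.mul_prod_erase Q _ hA]
  have h0 : A.card.factorial = A.card * (A.card - 1).factorial :=
    (Nat.mul_factorial_pred (Nat.one_le_iff_ne_zero.mp hcard)).symm
  have h1 : ((A.card + 1 - 1).factorial : ℝ) = (A.card : ℝ) * ((A.card - 1).factorial : ℝ) := by
    rw [Nat.add_sub_cancel, h0]
    push_cast
    ring
  rw [h1]
  have : ∏ A' ∈ Q.erase A, (((emb A').card - 1).factorial : ℝ)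
      = ∏ A' ∈ Q.erase A, ((A'.card - 1).factorial : ℝ) := by
    refine Finset.prod_congr rfl fun A' _ => by rw [card_emb]
  rw [this]; ring

lemma Psi1_left (hQ : isPart Q) (hA : A ∈ Q) {g : Finset (Fin (n + 1)) → E}
    (hg : g ∈ Gfin E (P1 Q A)) :
    (fun C => if C ∈ P1 Q A then
        (if C = insert (Fin.last n) (emb A) then
          (fun A' => if A' ∈ Q then
            (if A' = A then g (insert (Fin.last n) (emb A)) else g (emb A'))
            else Classical.arbitrary E) A
         else (fun A' => if A' ∈ Q then
            (if A' = A then g (insert (Fin.last n) (emb A)) else g (emb A'))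
            else Classical.arbitrary E) (dmb C))
      else Classical.arbitrary E) = g := by
  funext C
  by_cases hC : C ∈ P1 Q A
  · simp only [if_pos hC]
    by_cases hCb : C = insert (Fin.last n) (emb A)
    · rw [if_pos hCb, hCb]
      simp [hA]
    · rw [if_neg hCb]
      rcases Finset.mem_insert.mp hC with h' | h'
      · exact absurd h' hCb
      · obtain ⟨A', hA', rfl⟩ := Finset.mem_image.mp h'
        have h1 : A' ∈ Q := Finset.mem_of_mem_erase hA'
        have h2 : A' ≠ A := Finset.ne_of_mem_erase hA'
        simp only [dmb_emb A', if_pos h1, if_neg h2]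
  · simp only [if_neg hC]
    exact ((mem_Gfin.mp hg) C hC).symm

lemma sum_G_P1 (hQ : isPart Q) (hA : A ∈ Q) (h : (Finset (Fin (n + 1)) → E) → ℝ) :
    ∑ g ∈ Gfin E (P1 Q A), h g
      = ∑ g' ∈ Gfin E Q,
          h (fun C => if C ∈ P1 Q A then
              (if C = insert (Fin.last n) (emb A) then g' A else g' (dmb C))
              else Classical.arbitrary E) := by
  refine Finset.sum_nbij'
    (i := fun g => (fun A' => if A' ∈ Q then
        (if A' = A then g (insert (Fin.last n) (emb A)) else g (emb A'))
        else Classical.arbitrary E))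
    (j := fun g' => (fun C => if C ∈ P1 Q A then
        (if C = insert (Fin.last n) (emb A) then g' A else g' (dmb C))
        else Classical.arbitrary E)) ?_ ?_ ?_ ?_ ?_
  · intro g _
    exact mem_Gfin.mpr fun A' hA' => by simp only [if_neg hA']
  · intro g' _
    exact mem_Gfin.mpr fun C hC => by simp only [if_neg hC]
  · intro g hg
    exact Psi1_left hQ hA hg
  · intro g' hg'
    have h' := mem_Gfin.mp hg'
    funext A'
    by_cases h1 : A' ∈ Q
    · simp only [if_pos h1]
      by_cases h2 : A' = A
      · subst h2
        have hb : insert (Fin.last n) (emb A') ∈ P1 Q A' := Finset.mem_insert_self _ _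
        simp [hb]
      · have hm : emb A' ∈ P1 Q A := Finset.mem_insert_of_mem
          (Finset.mem_image_of_mem _ (Finset.mem_erase.mpr ⟨h2, h1⟩))
        have hne : emb A' ≠ insert (Fin.last n) (emb A) :=
          fun h => last_not_mem_emb (by rw [h]; exact last_mem_bb)
        rw [if_neg h2, if_pos hm, if_neg hne, dmb_emb]
    · simp only [if_neg h1]
      exact (h' A' h1).symm
  · intro g hg
    exact congrArg h (Psi1_left hQ hA hg).symm

lemma Phi1_emb {g' : Finset (Fin n) → E} {A' : Finset (Fin n)} (hA' : A' ∈ Q.erase A) :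
    (if emb A' ∈ P1 Q A then
        (if emb A' = insert (Fin.last n) (emb A) then g' A else g' (dmb (emb A')))
        else Classical.arbitrary E) = g' A' := by
  have hm : emb A' ∈ P1 Q A := Finset.mem_insert_of_mem (Finset.mem_image_of_mem _ hA')
  have hne : emb A' ≠ insert (Fin.last n) (emb A) :=
    fun h => last_not_mem_emb (by rw [h]; exact last_mem_bb)
  rw [if_pos hm, if_neg hne, dmb_emb]

lemma Phi1_bb {g' : Finset (Fin n) → E} :
    (if insert (Fin.last n) (emb A) ∈ P1 Q A then
        (if insert (Fin.last n) (emb A) = insert (Fin.last n) (emb A) then g' A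
         else g' (dmb (insert (Fin.last n) (emb A))))
        else Classical.arbitrary E) = g' A := by
  have hb : insert (Fin.last n) (emb A) ∈ P1 Q A := Finset.mem_insert_self _ _
  simp [hb]

lemma sumII_A (hQ : isPart Q) (hA : A ∈ Q) (f : (Fin (n + 1) → E) → ℝ) :
    (∏ C ∈ P1 Q A, ((C.card - 1).factorial : ℝ)) *
      ∑ g ∈ Gfin E (P1 Q A), (∏ C ∈ P1 Q A, α (g C)) * f (fun k => g (blockOf (P1 Q A) k))
    = (∏ A' ∈ Q, ((A'.card - 1).factorial : ℝ)) *
      ∑ g' ∈ Gfin E Q, (∏ A' ∈ Q, α (g' A')) *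
        ((A.card : ℝ) * f (Fin.snoc (fun j => g' (blockOf Q j)) (g' A))) := by
  rw [prod_fact_P1 hQ hA, sum_G_P1 hQ hA, Finset.mul_sum, Finset.mul_sum]
  refine Finset.sum_congr rfl fun g' hg' => ?_
  have hprod : (∏ C ∈ P1 Q A, α ((fun C => if C ∈ P1 Q A then
      (if C = insert (Fin.last n) (emb A) then g' A else g' (dmb C))
      else Classical.arbitrary E) C))
      = ∏ A' ∈ Q, α (g' A') := by
    rw [P1, Finset.prod_insert bb_not_mem_image,
      Finset.prod_image (fun A _ B _ h => emb_inj h)]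
    rw [← Finset.mul_prod_erase Q (fun A' => α (g' A')) hA]
    congr 1
    · exact congrArg α Phi1_bb
    · refine Finset.prod_congr rfl fun A' hA' => congrArg α (Phi1_emb hA')
  have htup : (fun k => (fun C => if C ∈ P1 Q A then
      (if C = insert (Fin.last n) (emb A) then g' A else g' (dmb C))
      else Classical.arbitrary E) (blockOf (P1 Q A) k))
      = Fin.snoc (fun j => g' (blockOf Q j)) (g' A) := by
    funext k
    refine Fin.lastCases ?_ (fun j => ?_) k
    · rw [blockOf_P1_last hQ hA, Fin.snoc_last]
      exact Phi1_bb
    · rw [Fin.snoc_castSucc]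
      by_cases hj : j ∈ A
      · rw [blockOf_P1_castSucc_mem hQ hA hj]
        rw [blockOf_eq_of hQ hA hj]
        exact Phi1_bb
      · have hb := blockOf_mem hQ j
        have hbA : blockOf Q j ≠ A := fun h => hj (h ▸ hb.2)
        rw [blockOf_P1_castSucc_not hQ hA hj]
        exact Phi1_emb (Finset.mem_erase.mpr ⟨hbA, hb.1⟩)
  rw [hprod, htup]
  ring

end aux8

section aux9
open Finset
variable {E : Type*} [Fintype E] [Nonempty E] {n : ℕ} {Q : Finset (Finset (Fin n))}

omit [Fintype E] [Nonempty E] in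
lemma sum_coords (hQ : isPart Q) (t : Fin n → ℝ) :
    ∑ i : Fin n, t i = ∑ A ∈ Q, ∑ i ∈ A, t i := by
  rw [← Finset.sum_fiberwise_of_maps_to (g := blockOf Q)
    (fun i _ => (blockOf_mem hQ i).1) t]
  refine Finset.sum_congr rfl fun A hA => ?_
  congr 1
  ext i
  simp only [Finset.mem_filter, Finset.mem_univ, true_and]
  constructor
  · intro h; exact h ▸ (blockOf_mem hQ i).2
  · intro h; exact blockOf_eq_of hQ hA h

end aux9

/-- the sequential ("Chinese restaurant") construction of `λ_n`:
`λ_{n+1} = λ_n k_{n,n+1}`, where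
`k_{n,n+1}(x₁,…,x_n; B) = ∫ 1_B(x₁,…,x_n,y) α(dy) + ∑_i 1_B(x₁,…,x_n,x_i)`. -/
theorem stmt19 {E : Type*} [Fintype E] [Nonempty E] (α : E → ℝ) (hα : ∀ e, 0 ≤ α e)
    (n : ℕ) (B : Set (Fin (n + 1) → E)) :
    lamInt α (n + 1) (fun v => if v ∈ B then (1 : ℝ) else 0)
      = lamInt α n (fun x =>
          (∑ y : E, α y * (if Fin.snoc x y ∈ B then (1 : ℝ) else 0))
            + ∑ i : Fin n, (if Fin.snoc x (x i) ∈ B then (1 : ℝ) else 0)) := by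
  set f : (Fin (n + 1) → E) → ℝ := fun v => if v ∈ B then (1 : ℝ) else 0 with hf
  rw [lamInt_eq, lamInt_eq, sum_partition_split]
  refine Finset.sum_congr rfl fun Q hQmem => ?_
  have hQ := mem_setPartitions.mp hQmem
  rw [sumI α hQ f]
  have step2 : ∑ A ∈ Q,
      (∏ C ∈ P1 Q A, ((C.card - 1).factorial : ℝ)) *
        ∑ g ∈ Gfin E (P1 Q A), (∏ C ∈ P1 Q A, α (g C)) * f (fun k => g (blockOf (P1 Q A) k))
      = (∏ A' ∈ Q, ((A'.card - 1).factorial : ℝ)) *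
        ∑ g' ∈ Gfin E Q, (∏ A' ∈ Q, α (g' A')) *
          ∑ i : Fin n, f (Fin.snoc (fun j => g' (blockOf Q j)) (g' (blockOf Q i))) := by
    rw [Finset.sum_congr rfl (fun A hA => sumII_A α hQ hA f), ← Finset.mul_sum]
    congr 1
    rw [Finset.sum_comm]
    refine Finset.sum_congr rfl fun g' _ => ?_
    rw [← Finset.mul_sum]
    congr 1
    rw [sum_coords hQ (fun i => f (Fin.snoc (fun j => g' (blockOf Q j)) (g' (blockOf Q i))))]
    refine Finset.sum_congr rfl fun A hA => ?_
    have hconst : ∀ i ∈ A, f (Fin.snoc (fun j => g' (blockOf Q j)) (g' (blockOf Q i)))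
        = f (Fin.snoc (fun j => g' (blockOf Q j)) (g' A)) := by
      intro i hi
      rw [blockOf_eq_of hQ hA hi]
    rw [Finset.sum_congr rfl hconst, Finset.sum_const, nsmul_eq_mul]
  rw [step2, ← mul_add, ← Finset.sum_add_distrib]
  congr 1
  refine Finset.sum_congr rfl fun g' _ => ?_
  ring
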